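/- Assume Ξ = ℝ^m, the loss function ℓ : ℝ^m → ℝ is convex, p = 1, and P̂_N = (1/N) Σ_{i=1}^N δ_{ξ̂_i} is the empirical distribution on samples ξ̂_1, …, ξ̂_N ∈ ℝ^m. Then the worst-case risk over the type-1 Wasserstein ball equals the Lipschitz-regularized empirical loss: sup_{Q ∈ 𝔹_{ε,1}(P̂_N)} E^Q[ℓ(ξ)] = (1/N) Σ_{i=1}^N ℓ(ξ̂_i) + ε · Lip(ℓ), where Lip(ℓ) = sup_{ξ ≠ ξ'} |ℓ(ξ) − ℓ(ξ')| / ‖ξ − ξ'‖. -/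

import Mathlib

open MeasureTheory Filter
open scoped ENNReal NNReal BigOperators Classical Matrix

noncomputable section

namespace WDro

variable {m : ℕ}

/-- Axioms for an abstract norm `nrm` on `ℝ^m`. -/
structure IsNorm (nrm : (Fin m → ℝ) → ℝ) : Prop where
  eq_zero_iff : ∀ x, nrm x = 0 ↔ x = 0
  triangle : ∀ x y, nrm (x + y) ≤ nrm x + nrm y
  homog : ∀ (c : ℝ) (x : Fin m → ℝ), nrm (c • x) = |c| * nrm x

/-- The Euclidean norm on `ℝ^m`. -/
def eucNorm (x : Fin m → ℝ) : ℝ := Real.sqrt (x ⬝ᵥ x)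

/-- The dual norm `‖z‖_* = sup_{‖ξ‖ ≤ 1} z^⊤ ξ`. -/
def dualNorm (nrm : (Fin m → ℝ) → ℝ) (z : Fin m → ℝ) : ℝ :=
  sSup {r : ℝ | ∃ ξ : Fin m → ℝ, nrm ξ ≤ 1 ∧ r = z ⬝ᵥ ξ}

/-- The set of couplings of `Q` and `Q'`: joint distributions with the given marginals. -/
def Couplings {α : Type*} [MeasurableSpace α] (Q Q' : Measure α) : Set (Measure (α × α)) :=
  {π | IsProbabilityMeasure π ∧ π.map Prod.fst = Q ∧ π.map Prod.snd = Q'}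

/-- The type-`p` Wasserstein distance with transportation cost `nrm (ξ - ξ') ^ p`. -/
def Wp (nrm : (Fin m → ℝ) → ℝ) (p : ℝ) (Q Q' : Measure (Fin m → ℝ)) : ℝ≥0∞ :=
  (⨅ π ∈ Couplings Q Q', ∫⁻ ξ, ENNReal.ofReal (nrm (ξ.1 - ξ.2) ^ p) ∂π) ^ (1 / p)

/-- The type-`p` Wasserstein ball of radius `ε` around `P`, within distributions on `Ξ`. -/
def WBall (nrm : (Fin m → ℝ) → ℝ) (p ε : ℝ) (Ξ : Set (Fin m → ℝ))
    (P : Measure (Fin m → ℝ)) : Set (Measure (Fin m → ℝ)) :=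
  {Q | IsProbabilityMeasure Q ∧ Q Ξᶜ = 0 ∧ Wp nrm p Q P ≤ ENNReal.ofReal ε}

/-- Positive part of an extended real number, as an extended nonnegative real. -/
def epos (x : EReal) : ℝ≥0∞ := if x = ⊤ then ⊤ else ENNReal.ofReal x.toReal

/-- Canonical map from `ℝ≥0∞` to `EReal`. -/
def ennToE (x : ℝ≥0∞) : EReal := if x = ⊤ then ⊤ else ((x.toReal : ℝ) : EReal)

/-- Expectation of an extended-real-valued loss under `Q`, with the convention that the
expectation is `+∞` whenever the positive part has infinite integral. -/
def eexp {α : Type*} [MeasurableSpace α] (Q : Measure α) (ℓ : α → EReal) : EReal :=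
  if (∫⁻ x, epos (ℓ x) ∂Q) = ⊤ then ⊤
  else if (∫⁻ x, epos (-(ℓ x)) ∂Q) = ⊤ then ⊥
  else (((∫⁻ x, epos (ℓ x) ∂Q).toReal - (∫⁻ x, epos (-(ℓ x)) ∂Q).toReal : ℝ) : EReal)

/-- Integrability of an extended-real-valued loss under `Q`. -/
def IntegrableE {α : Type*} [MeasurableSpace α] (Q : Measure α) (ℓ : α → EReal) : Prop :=
  Measurable ℓ ∧ (∫⁻ x, epos (ℓ x) ∂Q) ≠ ⊤ ∧ (∫⁻ x, epos (-(ℓ x)) ∂Q) ≠ ⊤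

/-- Lipschitz modulus of an extended-real-valued function with respect to `nrm`. -/
def lipModE (nrm : (Fin m → ℝ) → ℝ) (ℓ : (Fin m → ℝ) → EReal) : ℝ≥0∞ :=
  ⨆ (x : Fin m → ℝ) (y : Fin m → ℝ) (_ : x ≠ y),
    epos (ℓ x - ℓ y) / ENNReal.ofReal (nrm (x - y))

/-- Lipschitz modulus of a real-valued function with respect to `nrm`. -/
def lipMod (nrm : (Fin m → ℝ) → ℝ) (φ : (Fin m → ℝ) → ℝ) : ℝ≥0∞ :=
  ⨆ (x : Fin m → ℝ) (y : Fin m → ℝ) (_ : x ≠ y),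
    ENNReal.ofReal (|φ x - φ y| / nrm (x - y))

/-- The empirical distribution on `N` samples. -/
def empirical (N : ℕ) (xs : Fin N → (Fin m → ℝ)) : Measure (Fin m → ℝ) :=
  (N : ℝ≥0∞)⁻¹ • ∑ i, Measure.dirac (xs i)

/-- The mean vector of a distribution on `ℝ^m`. -/
def meanVec (Q : Measure (Fin m → ℝ)) : Fin m → ℝ := fun i => ∫ x, x i ∂Q

/-- The covariance matrix of a distribution on `ℝ^m`. -/
def covMatrix (Q : Measure (Fin m → ℝ)) : Matrix (Fin m) (Fin m) ℝ :=
  Matrix.of fun i j => ∫ x, (x i - meanVec Q i) * (x j - meanVec Q j) ∂Q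

/-- The positive semidefinite square root of a matrix (junk value `0` off the PSD cone). -/
def psdSqrt (A : Matrix (Fin m) (Fin m) ℝ) : Matrix (Fin m) (Fin m) ℝ :=
  if h : A.PosSemidef then h.1.cfc Real.sqrt else 0

/-- The mean-covariance uncertainty set `𝒰_ε(μ̂, Σ̂)`. -/
def Uset (ε : ℝ) (muh : Fin m → ℝ) (Sh : Matrix (Fin m) (Fin m) ℝ) :
    Set ((Fin m → ℝ) × Matrix (Fin m) (Fin m) ℝ) :=
  {p | p.2.PosSemidef ∧
    eucNorm (muh - p.1) ^ 2 +
      (Sh + p.2 - (2 : ℝ) • psdSqrt (psdSqrt Sh * p.2 * psdSqrt Sh)).trace ≤ ε ^ 2}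

/-- The first- and second-order moment uncertainty set `𝒱_ε(μ̂, Σ̂)`. -/
def Vset (ε : ℝ) (muh : Fin m → ℝ) (Sh : Matrix (Fin m) (Fin m) ℝ) :
    Set ((Fin m → ℝ) × Matrix (Fin m) (Fin m) ℝ) :=
  {p | p.2.PosSemidef ∧ (p.1, p.2 - Matrix.vecMulVec p.1 p.1) ∈ Uset ε muh Sh}

/-- The Gelbrich hull `𝔾_ε(μ̂, Σ̂)` of distributions on `Ξ`. -/
def GHull (ε : ℝ) (muh : Fin m → ℝ) (Sh : Matrix (Fin m) (Fin m) ℝ)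
    (Ξ : Set (Fin m → ℝ)) : Set (Measure (Fin m → ℝ)) :=
  {Q | IsProbabilityMeasure Q ∧ Q Ξᶜ = 0 ∧ Integrable (fun x => x ⬝ᵥ x) Q ∧
    (meanVec Q, covMatrix Q) ∈ Uset ε muh Sh}

/-- `Q` is the elliptical distribution `ℰ_g(μ, Σ)`. -/
def IsElliptical (g : ℝ → ℝ) (mu : Fin m → ℝ) (Sh : Matrix (Fin m) (Fin m) ℝ)
    (Q : Measure (Fin m → ℝ)) : Prop :=
  IsProbabilityMeasure Q ∧ (∀ u : ℝ, 0 ≤ u → 0 ≤ g u) ∧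
    Integrable (fun x => x ⬝ᵥ x) Q ∧ meanVec Q = mu ∧ covMatrix Q = Sh ∧
    ∃ C : ℝ, 0 < C ∧
      Q = volume.withDensity
        (fun ξ => ENNReal.ofReal (C * (Sh.det)⁻¹ * g ((ξ - mu) ⬝ᵥ (Sh⁻¹).mulVec (ξ - mu))))

/-- The symmetric block matrix `[[A, b], [bᵀ, c]]`. -/
def blockM (A : Matrix (Fin m) (Fin m) ℝ) (b : Fin m → ℝ) (c : ℝ) :
    Matrix (Fin m ⊕ Unit) (Fin m ⊕ Unit) ℝ :=
  Matrix.fromBlocks A (Matrix.of fun i (_ : Unit) => b i)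
    (Matrix.of fun (_ : Unit) j => b j) (Matrix.of fun (_ : Unit) (_ : Unit) => c)

/-- The largest eigenvalue of a (symmetric) matrix. -/
def lambdaMax (Q : Matrix (Fin m) (Fin m) ℝ) : ℝ :=
  sSup {r : ℝ | ∃ v : Fin m → ℝ, v ≠ 0 ∧ Q.mulVec v = r • v}

/-- Convexity of an extended-real-valued function. -/
def ConvexE (f : (Fin m → ℝ) → EReal) : Prop :=
  ∀ x y : Fin m → ℝ, ∀ t : ℝ, 0 ≤ t → t ≤ 1 →
    f (t • x + (1 - t) • y) ≤ (t : EReal) * f x + ((1 - t : ℝ) : EReal) * f y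

/-- The convex conjugate of an extended-real-valued function. -/
def conjE (f : (Fin m → ℝ) → EReal) (z : Fin m → ℝ) : EReal :=
  ⨆ ξ : Fin m → ℝ, (((z ⬝ᵥ ξ) : ℝ) : EReal) - f ξ

/-- The support function of a set `Ξ ⊆ ℝ^m`. -/
def suppFnE (Ξ : Set (Fin m → ℝ)) (z : Fin m → ℝ) : EReal :=
  ⨆ ξ : Ξ, (((z ⬝ᵥ (ξ : Fin m → ℝ)) : ℝ) : EReal)

/-- The constant `φ(q) = (q-1)^(q-1)/q^q` for `q > 1` and `φ(1) = 1`. -/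
def phiq (q : ℝ) : ℝ := if q = 1 then 1 else (q - 1) ^ (q - 1) / q ^ q

/-- The term `φ(q) γ ‖u/γ‖_*^q`, with the limiting convention at `γ = 0`. -/
def perspDual (nrm : (Fin m → ℝ) → ℝ) (q γ : ℝ) (u : Fin m → ℝ) : EReal :=
  if γ = 0 then (if q = 1 then ((dualNorm nrm u : ℝ) : EReal) else if u = 0 then 0 else ⊤)
  else ((phiq q * (γ * dualNorm nrm (γ⁻¹ • u) ^ q) : ℝ) : EReal)

/-- The perspective `α ‖θ/α‖^p` of the `p`-th power of the norm, with the limiting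
convention `0 ‖θ/0‖^p = lim_{α ↓ 0} α ‖θ/α‖^p`. -/
def perspNorm (nrm : (Fin m → ℝ) → ℝ) (p : ℝ) (θ : Fin m → ℝ) (α : ℝ) : EReal :=
  if α = 0 then (if p = 1 then ((nrm θ : ℝ) : EReal) else if θ = 0 then 0 else ⊤)
  else ((α * nrm (α⁻¹ • θ) ^ p : ℝ) : EReal)

/-- The perspective `α f(x + θ/α)` of a loss, defined at `α = 0` as the value making it
upper semicontinuous there (the limit superior from `α > 0`). -/
def perspLoss (f : (Fin m → ℝ) → EReal) (x θ : Fin m → ℝ) (α : ℝ) : EReal :=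
  if α = 0 then
    Filter.limsup
      (fun pr : (Fin m → ℝ) × ℝ => (pr.2 : EReal) * f (x + pr.2⁻¹ • pr.1))
      ((nhds θ) ×ˢ (nhdsWithin 0 (Set.Ioi (0 : ℝ))))
  else (α : EReal) * f (x + α⁻¹ • θ)

/-- The recession cone of a set `Ξ ⊆ ℝ^m`. -/
def recessionCone (Ξ : Set (Fin m → ℝ)) : Set (Fin m → ℝ) :=
  {θ | ∀ ξ ∈ Ξ, ∀ t : ℝ, 0 ≤ t → ξ + t • θ ∈ Ξ}

/-- The constraint `x + θ/α ∈ Ξ`, interpreted at `α = 0` as membership of `θ` in the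
recession cone of `Ξ`. -/
def perspMem (Ξ : Set (Fin m → ℝ)) (x θ : Fin m → ℝ) (α : ℝ) : Prop :=
  if α = 0 then θ ∈ recessionCone Ξ else x + α⁻¹ • θ ∈ Ξ

/-- The standard Gaussian distribution on `ℝ^m`. -/
def stdGaussianPi (m : ℕ) : Measure (Fin m → ℝ) :=
  Measure.pi fun _ => ProbabilityTheory.gaussianReal 0 1

/-- The (possibly degenerate) normal distribution `𝒩(μ̂, Σ̂)` on `ℝ^m`. -/
def mvNormal (muh : Fin m → ℝ) (Sh : Matrix (Fin m) (Fin m) ℝ) : Measure (Fin m → ℝ) :=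
  (stdGaussianPi m).map (fun z => muh + (psdSqrt Sh).mulVec z)

/-- `- log det X`, valued `+∞` when `det X ≤ 0`. -/
def negLogDet (X : Matrix (Fin m) (Fin m) ℝ) : EReal :=
  if X.det ≤ 0 then ⊤ else ((-Real.log X.det : ℝ) : EReal)

/-- The hinge loss. -/
def hingeLoss (z : ℝ) : ℝ := max 0 (1 - z)

/-- The smooth hinge loss. -/
def smoothHingeLoss (z : ℝ) : ℝ :=
  if z ≤ 0 then 1 / 2 - z else if z < 1 then (1 - z) ^ 2 / 2 else 0

/-- The logloss. -/
def logLoss (z : ℝ) : ℝ := Real.log (1 + Real.exp (-z))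

/-- The input-output transportation cost with `κ = ∞`: moving mass between points with
different outputs is infinitely expensive. -/
def classDist (n : ℕ) (nrm : (Fin n → ℝ) → ℝ) (a b : (Fin n → ℝ) × ℝ) : ℝ≥0∞ :=
  if a.2 = b.2 then ENNReal.ofReal (nrm (a.1 - b.1)) else ⊤

/-- The type-1 Wasserstein distance on the input-output space for the cost `classDist`. -/
def W1class (n : ℕ) (nrm : (Fin n → ℝ) → ℝ) (Q Q' : Measure ((Fin n → ℝ) × ℝ)) : ℝ≥0∞ :=
  ⨅ π ∈ Couplings Q Q', ∫⁻ pr, classDist n nrm pr.1 pr.2 ∂π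

/-- The type-1 Wasserstein ball on the input-output space `ℝ^n × {-1, +1}`. -/
def classBall (n : ℕ) (nrm : (Fin n → ℝ) → ℝ) (ε : ℝ) (P : Measure ((Fin n → ℝ) × ℝ)) :
    Set (Measure ((Fin n → ℝ) × ℝ)) :=
  {Q | IsProbabilityMeasure Q ∧
    Q ({ξ : (Fin n → ℝ) × ℝ | ξ.2 = 1 ∨ ξ.2 = -1})ᶜ = 0 ∧
    W1class n nrm Q P ≤ ENNReal.ofReal ε}

/-- The empirical distribution on `N` labeled samples. -/
def empiricalClass (n N : ℕ) (xs : Fin N → (Fin n → ℝ)) (ys : Fin N → ℝ) :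
    Measure ((Fin n → ℝ) × ℝ) :=
  (N : ℝ≥0∞)⁻¹ • ∑ i, Measure.dirac (xs i, ys i)

/-- The distributionally robust maximum likelihood objective. -/
def mleObj (ε : ℝ) (muh : Fin m → ℝ) (Sh : Matrix (Fin m) (Fin m) ℝ)
    (mu : Fin m → ℝ) (X : Matrix (Fin m) (Fin m) ℝ) : EReal :=
  negLogDet X +
    ⨆ Q : (WBall eucNorm 2 ε Set.univ (mvNormal muh Sh)),
      eexp Q.1 (fun ξ => (((ξ - mu) ⬝ᵥ X.mulVec (ξ - mu) : ℝ) : EReal))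

end WDro
namespace WDro

/-! ### Auxiliary lemmas -/

section Aux

variable {m : ℕ}

lemma IsNorm.zero {nrm : (Fin m → ℝ) → ℝ} (h : IsNorm nrm) : nrm 0 = 0 :=
  (h.eq_zero_iff 0).2 rfl

lemma IsNorm.neg' {nrm : (Fin m → ℝ) → ℝ} (h : IsNorm nrm) (x : Fin m → ℝ) :
    nrm (-x) = nrm x := by
  have := h.homog (-1) x
  simpa using this

lemma IsNorm.nonneg {nrm : (Fin m → ℝ) → ℝ} (h : IsNorm nrm) (x : Fin m → ℝ) :
    0 ≤ nrm x := by
  have h2 := h.triangle x (-x)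
  rw [add_neg_cancel, h.zero, h.neg' x] at h2
  linarith

lemma IsNorm.pos {nrm : (Fin m → ℝ) → ℝ} (h : IsNorm nrm) {x : Fin m → ℝ} (hx : x ≠ 0) :
    0 < nrm x :=
  lt_of_le_of_ne (h.nonneg x) (fun hc => hx ((h.eq_zero_iff x).1 hc.symm))

lemma IsNorm.sum_le {nrm : (Fin m → ℝ) → ℝ} (h : IsNorm nrm) {ι : Type*} (s : Finset ι)
    (f : ι → (Fin m → ℝ)) : nrm (∑ i ∈ s, f i) ≤ ∑ i ∈ s, nrm (f i) := by
  classical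
  induction s using Finset.induction_on with
  | empty => simp [h.zero]
  | @insert a s hx ih =>
      rw [Finset.sum_insert hx, Finset.sum_insert hx]
      exact le_trans (h.triangle _ _) (by linarith)

lemma IsNorm.le_const {nrm : (Fin m → ℝ) → ℝ} (h : IsNorm nrm) :
    ∃ C : ℝ, 0 ≤ C ∧ ∀ v : Fin m → ℝ, nrm v ≤ C * ‖v‖ := by
  classical
  refine ⟨∑ i : Fin m, nrm (fun j => if i = j then (1 : ℝ) else 0), ?_, ?_⟩
  · exact Finset.sum_nonneg fun i _ => h.nonneg _
  · intro v
    calc nrm v = nrm (∑ i : Fin m, v i • fun j => if i = j then (1 : ℝ) else 0) := by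
          rw [← pi_eq_sum_univ v]
    _ ≤ ∑ i : Fin m, nrm (v i • fun j => if i = j then (1 : ℝ) else 0) :=
          h.sum_le _ _
    _ = ∑ i : Fin m, |v i| * nrm (fun j => if i = j then (1 : ℝ) else 0) := by
          simp [h.homog]
    _ ≤ ∑ i : Fin m, ‖v‖ * nrm (fun j => if i = j then (1 : ℝ) else 0) := by
          refine Finset.sum_le_sum fun i _ => ?_
          have h1 : |v i| ≤ ‖v‖ := by
            simpa [Real.norm_eq_abs] using norm_le_pi_norm v i
          exact mul_le_mul_of_nonneg_right h1 (h.nonneg _)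
    _ = (∑ i : Fin m, nrm (fun j => if i = j then (1 : ℝ) else 0)) * ‖v‖ := by
          rw [Finset.sum_mul]
          exact Finset.sum_congr rfl fun i _ => mul_comm _ _

lemma IsNorm.continuous {nrm : (Fin m → ℝ) → ℝ} (h : IsNorm nrm) : Continuous nrm := by
  obtain ⟨C, hC0, hC⟩ := h.le_const
  have key : ∀ x y : Fin m → ℝ, nrm x - nrm y ≤ C * dist x y := by
    intro x y
    have h1 : nrm x ≤ nrm y + nrm (x - y) := by
      have := h.triangle y (x - y)
      simpa using this
    have h2 : nrm (x - y) ≤ C * ‖x - y‖ := hC _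
    rw [dist_eq_norm]
    linarith
  have lip : LipschitzWith (Real.toNNReal C) nrm := by
    apply LipschitzWith.of_dist_le_mul
    intro x y
    rw [Real.dist_eq, abs_le]
    constructor
    · have := key y x
      rw [dist_comm y x] at this
      simp only [Real.coe_toNNReal _ hC0]
      linarith
    · simpa [Real.coe_toNNReal _ hC0] using key x y
  exact lip.continuous

lemma IsNorm.measurable {nrm : (Fin m → ℝ) → ℝ} (h : IsNorm nrm) : Measurable nrm :=
  h.continuous.measurable

lemma epos_coe (r : ℝ) : epos ((r : ℝ) : EReal) = ENNReal.ofReal r := by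
  simp [epos]

lemma epos_neg_coe (r : ℝ) : epos (-((r : ℝ) : EReal)) = ENNReal.ofReal (-r) := by
  rw [← EReal.coe_neg, epos_coe]

/-- `eexp` of a coerced real-valued integrable function is the Bochner integral. -/
lemma eexp_coe_eq_integral {α : Type*} [MeasurableSpace α] (Q : Measure α) (f : α → ℝ)
    (hf : Integrable f Q) :
    eexp Q (fun x => ((f x : ℝ) : EReal)) = ((∫ x, f x ∂Q : ℝ) : EReal) := by
  have h1 : ∀ x, epos ((f x : ℝ) : EReal) = ENNReal.ofReal (f x) := fun x => epos_coe _
  have h2 : ∀ x, epos (-((f x : ℝ) : EReal)) = ENNReal.ofReal (-(f x)) := fun x =>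
    epos_neg_coe _
  have hfin : (∫⁻ x, ‖f x‖ₑ ∂Q) < ⊤ := hf.2
  have hp : (∫⁻ x, ENNReal.ofReal (f x) ∂Q) ≠ ⊤ := by
    refine ne_of_lt (lt_of_le_of_lt (lintegral_mono fun x => ?_) hfin)
    rw [Real.enorm_eq_ofReal_abs]
    exact ENNReal.ofReal_le_ofReal (le_abs_self _)
  have hn : (∫⁻ x, ENNReal.ofReal (-(f x)) ∂Q) ≠ ⊤ := by
    refine ne_of_lt (lt_of_le_of_lt (lintegral_mono fun x => ?_) hfin)
    rw [Real.enorm_eq_ofReal_abs]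
    exact ENNReal.ofReal_le_ofReal (neg_le_abs _)
  rw [eexp]
  simp only [h1, h2]
  rw [if_neg hp, if_neg hn,
    MeasureTheory.integral_eq_lintegral_pos_part_sub_lintegral_neg_part hf]

section MeasAux

variable {α : Type*} [MeasurableSpace α]

lemma integrable_dirac_sm [MeasurableSingletonClass α] {f : α → ℝ}
    (hf : StronglyMeasurable f) (a : α) : Integrable f (Measure.dirac a) := by
  refine ⟨hf.aestronglyMeasurable, ?_⟩
  rw [HasFiniteIntegral, lintegral_dirac]
  exact ENNReal.coe_lt_top

lemma integrable_smul_measure' {f : α → ℝ} {μ : Measure α} (h : Integrable f μ)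
    {c : ℝ≥0∞} (hc : c ≠ ⊤) : Integrable f (c • μ) :=
  h.smul_measure hc

end MeasAux

section EmpAux

variable {m N : ℕ}

lemma empirical_isProb (hN : 0 < N) (xs : Fin N → (Fin m → ℝ)) :
    IsProbabilityMeasure (empirical N xs) := by
  constructor
  rw [empirical, Measure.smul_apply, Measure.finset_sum_apply]
  simp only [Measure.dirac_apply_of_mem (Set.mem_univ _), Finset.sum_const,
    Finset.card_univ, Fintype.card_fin, nsmul_eq_mul, mul_one, smul_eq_mul]
  exact ENNReal.inv_mul_cancel (by exact_mod_cast hN.ne') (by simp)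

lemma lintegral_empirical (xs : Fin N → (Fin m → ℝ)) (f : (Fin m → ℝ) → ℝ≥0∞)
    (hf : Measurable f) :
    ∫⁻ x, f x ∂(empirical N xs) = (N : ℝ≥0∞)⁻¹ * ∑ i, f (xs i) := by
  rw [empirical, lintegral_smul_measure, lintegral_finset_sum_measure]
  simp only [lintegral_dirac' _ hf, smul_eq_mul]

lemma integrable_empirical (xs : Fin N → (Fin m → ℝ)) {f : (Fin m → ℝ) → ℝ}
    (hf : StronglyMeasurable f) (hN : 0 < N) : Integrable f (empirical N xs) := by
  rw [empirical]
  refine Integrable.smul_measure ?_ ?_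
  · exact integrable_finset_sum_measure.2 fun i _ => integrable_dirac_sm hf _
  · simp [ENNReal.inv_ne_top, hN.ne']

lemma integral_empirical (xs : Fin N → (Fin m → ℝ)) {f : (Fin m → ℝ) → ℝ}
    (hf : StronglyMeasurable f) :
    ∫ x, f x ∂(empirical N xs) = (N : ℝ)⁻¹ * ∑ i, f (xs i) := by
  rw [empirical, integral_smul_measure,
    integral_finset_sum_measure (fun i _ => integrable_dirac_sm hf _)]
  simp only [integral_dirac' _ _ hf, ENNReal.toReal_inv, ENNReal.toReal_natCast,
    smul_eq_mul]

end EmpAux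

section PointAux

variable {α : Type*} [MeasurableSpace α] [MeasurableSingletonClass α]

/-- If `P` is supported on a finite set `T` and `Q` dominates `P` on points of `T`, then,
both being probability measures, `Q = P`. -/
lemma eq_of_point_masses (Q P : Measure α) (hQ : IsProbabilityMeasure Q)
    (hP : IsProbabilityMeasure P) (T : Finset α) (hPT : P (↑T)ᶜ = 0)
    (hpt : ∀ v ∈ T, P {v} ≤ Q {v}) : Q = P := by
  classical
  have hTm : MeasurableSet (↑T : Set α) := (T.finite_toSet).measurableSet
  have hsum : ∀ (μ : Measure α) (s : Finset α), μ (↑s) = ∑ v ∈ s, μ {v} := by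
    intro μ s
    have : (↑s : Set α) = ⋃ v ∈ s, {v} := by ext x; simp
    rw [this, measure_biUnion_finset]
    · intro x _ y _ hxy
      simp [Set.disjoint_singleton, hxy]
    · intro b _; exact measurableSet_singleton b
  have hPT1 : P (↑T) = 1 := by
    have := measure_add_measure_compl (μ := P) hTm
    rw [hPT, add_zero] at this
    rw [this]; exact measure_univ
  have hQT : (1 : ℝ≥0∞) ≤ Q ↑T := by
    calc (1 : ℝ≥0∞) = P ↑T := hPT1.symm
    _ = ∑ v ∈ T, P {v} := hsum P T
    _ ≤ ∑ v ∈ T, Q {v} := Finset.sum_le_sum hpt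
    _ = Q ↑T := (hsum Q T).symm
  have hQT1 : Q (↑T) = 1 := le_antisymm prob_le_one hQT
  have hQTc : Q (↑T)ᶜ = 0 := by
    rw [measure_compl hTm (measure_ne_top Q _), hQT1, measure_univ, tsub_self]
  have hpt' : ∀ v ∈ T, Q {v} = P {v} := by
    intro v hv
    refine le_antisymm ?_ (hpt v hv)
    have hfin : (∑ w ∈ T.erase v, P {w}) ≠ ⊤ := by
      refine ne_of_lt (lt_of_le_of_lt ?_ (by simp : (1:ℝ≥0∞) < ⊤))
      calc (∑ w ∈ T.erase v, P {w}) ≤ ∑ w ∈ T, P {w} :=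
            Finset.sum_le_sum_of_subset (Finset.erase_subset _ _)
      _ = P ↑T := (hsum P T).symm
      _ ≤ 1 := prob_le_one
    have key : Q {v} + ∑ w ∈ T.erase v, P {w} ≤ P {v} + ∑ w ∈ T.erase v, P {w} := by
      calc Q {v} + ∑ w ∈ T.erase v, P {w} ≤ Q {v} + ∑ w ∈ T.erase v, Q {w} := by
            exact add_le_add le_rfl (Finset.sum_le_sum fun w hw => hpt w (Finset.mem_of_mem_erase hw))
      _ = ∑ w ∈ T, Q {w} := Finset.add_sum_erase _ (fun w => Q {w}) hv
      _ = Q ↑T := (hsum Q T).symm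
      _ = P ↑T := by rw [hQT1, hPT1]
      _ = ∑ w ∈ T, P {w} := hsum P T
      _ = P {v} + ∑ w ∈ T.erase v, P {w} := (Finset.add_sum_erase _ (fun w => P {w}) hv).symm
    exact ENNReal.le_of_add_le_add_right hfin key
  refine Measure.ext fun s hs => ?_
  have hdecomp : ∀ (μ : Measure α), μ ((↑T : Set α)ᶜ) = 0 → μ s = ∑ v ∈ T.filter (· ∈ s), μ {v} := by
    intro μ hμc
    have h1 : μ s = μ (s ∩ ↑T) := by
      have h2 : μ (s \ ↑T) = 0 :=
        measure_mono_null (fun x hx => hx.2) hμc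
      have := measure_inter_add_diff (μ := μ) s hTm
      rw [h2, add_zero] at this
      exact this.symm
    have h3 : s ∩ ↑T = (↑(T.filter (· ∈ s)) : Set α) := by
      ext x; simp [and_comm]
    rw [h1, h3, hsum μ (T.filter (· ∈ s))]
  rw [hdecomp Q hQTc, hdecomp P hPT]
  exact Finset.sum_congr rfl fun v hv => hpt' v (Finset.mem_of_mem_filter v hv)

end PointAux

section TripleAux

variable {β γ : Type*} [MeasurableSpace β] [MeasurableSpace γ]

lemma map_finset_sum {ι : Type*} {f : β → γ} (hf : Measurable f) (s : Finset ι)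
    (μ : ι → Measure β) : (∑ i ∈ s, μ i).map f = ∑ i ∈ s, (μ i).map f := by
  classical
  induction s using Finset.induction_on with
  | empty => simp
  | @insert a s ha ih =>
      rw [Finset.sum_insert ha, Measure.map_add _ _ hf, ih, Finset.sum_insert ha]

lemma triple_univ (a b c : ℝ≥0∞) (u v : β) {ι : Type*} (s : Finset ι) (w : ι → β) :
    (a • Measure.dirac u + b • Measure.dirac v + c • ∑ i ∈ s, Measure.dirac (w i))
      Set.univ = a + b + c * s.card := by
  simp only [Measure.add_apply, Measure.smul_apply, Measure.finset_sum_apply,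
    Measure.dirac_apply_of_mem (Set.mem_univ _), Finset.sum_const, nsmul_eq_mul,
    mul_one, smul_eq_mul]

lemma triple_lintegral (a b c : ℝ≥0∞) (u v : β) {ι : Type*} (s : Finset ι) (w : ι → β)
    (f : β → ℝ≥0∞) (hf : Measurable f) :
    ∫⁻ x, f x ∂(a • Measure.dirac u + b • Measure.dirac v
        + c • ∑ i ∈ s, Measure.dirac (w i)) = a * f u + b * f v + c * ∑ i ∈ s, f (w i) := by
  rw [lintegral_add_measure, lintegral_add_measure, lintegral_smul_measure,
    lintegral_smul_measure, lintegral_smul_measure, lintegral_finset_sum_measure]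
  simp only [lintegral_dirac' _ hf, smul_eq_mul]

lemma triple_map (a b c : ℝ≥0∞) (u v : β) {ι : Type*} (s : Finset ι) (w : ι → β)
    {f : β → γ} (hf : Measurable f) :
    (a • Measure.dirac u + b • Measure.dirac v
        + c • ∑ i ∈ s, Measure.dirac (w i)).map f
      = a • Measure.dirac (f u) + b • Measure.dirac (f v)
        + c • ∑ i ∈ s, Measure.dirac (f (w i)) := by
  rw [Measure.map_add _ _ hf, Measure.map_add _ _ hf, Measure.map_smul,
    Measure.map_smul, Measure.map_smul, map_finset_sum hf]
  simp only [Measure.map_dirac' hf]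

lemma triple_integrable [MeasurableSingletonClass β] {a b c : ℝ≥0∞} (ha : a ≠ ⊤)
    (hb : b ≠ ⊤) (hc : c ≠ ⊤) (u v : β) {ι : Type*} (s : Finset ι) (w : ι → β)
    {f : β → ℝ} (hf : StronglyMeasurable f) :
    Integrable f (a • Measure.dirac u + b • Measure.dirac v
        + c • ∑ i ∈ s, Measure.dirac (w i)) := by
  refine (integrable_add_measure.2 ⟨integrable_add_measure.2 ⟨?_, ?_⟩, ?_⟩)
  · exact (integrable_dirac_sm hf u).smul_measure ha
  · exact (integrable_dirac_sm hf v).smul_measure hb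
  · exact (integrable_finset_sum_measure.2 fun i _ =>
      integrable_dirac_sm hf _).smul_measure hc

lemma triple_integral [MeasurableSingletonClass β] {a b c : ℝ≥0∞} (ha : a ≠ ⊤)
    (hb : b ≠ ⊤) (hc : c ≠ ⊤) (u v : β) {ι : Type*} (s : Finset ι) (w : ι → β)
    {f : β → ℝ} (hf : StronglyMeasurable f) :
    ∫ x, f x ∂(a • Measure.dirac u + b • Measure.dirac v
        + c • ∑ i ∈ s, Measure.dirac (w i))
      = a.toReal * f u + b.toReal * f v + c.toReal * ∑ i ∈ s, f (w i) := by
  rw [integral_add_measure (integrable_add_measure.2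
      ⟨(integrable_dirac_sm hf u).smul_measure ha,
        (integrable_dirac_sm hf v).smul_measure hb⟩)
      ((integrable_finset_sum_measure.2 fun i _ =>
        integrable_dirac_sm hf _).smul_measure hc),
    integral_add_measure ((integrable_dirac_sm hf u).smul_measure ha)
      ((integrable_dirac_sm hf v).smul_measure hb),
    integral_smul_measure, integral_smul_measure, integral_smul_measure,
    integral_finset_sum_measure (fun i _ => integrable_dirac_sm hf _)]
  simp only [integral_dirac' _ _ hf, smul_eq_mul]

end TripleAux

section WpAux

variable {m : ℕ}

lemma Wp_one_eq (nrm : (Fin m → ℝ) → ℝ) (Q P : Measure (Fin m → ℝ)) :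
    Wp nrm 1 Q P
      = ⨅ π ∈ Couplings Q P, ∫⁻ p, ENNReal.ofReal (nrm (p.1 - p.2)) ∂π := by
  rw [Wp]
  have h1 : (1 : ℝ) / 1 = 1 := by norm_num
  rw [h1, ENNReal.rpow_one]
  simp_rw [Real.rpow_one]

/-- The workhorse construction: moving mass `t/N` from `xs i₀` to `z` stays in the ball
provided the transport budget is respected, and realizes an explicit expected loss. -/
lemma lower_aux {N : ℕ} (hN : 0 < N) (nrm : (Fin m → ℝ) → ℝ) (hnrm : IsNorm nrm)
    {ε : ℝ} (hε : 0 ≤ ε) (xs : Fin N → (Fin m → ℝ)) {ℓ : (Fin m → ℝ) → ℝ}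
    (hℓc : Continuous ℓ) (i₀ : Fin N) (z : Fin m → ℝ) {t : ℝ} (ht0 : 0 ≤ t)
    (ht1 : t ≤ 1) (hcost : t / N * nrm (z - xs i₀) ≤ ε) :
    ∃ Q ∈ WBall nrm 1 ε Set.univ (empirical N xs),
      eexp Q (fun x => ((ℓ x : ℝ) : EReal))
        = ((((N : ℝ))⁻¹ * ∑ i, ℓ (xs i) + t / N * (ℓ z - ℓ (xs i₀)) : ℝ) : EReal) := by
  classical
  set x₀ := xs i₀ with hx₀
  set a : ℝ≥0∞ := (N : ℝ≥0∞)⁻¹ * ENNReal.ofReal t with ha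
  set b : ℝ≥0∞ := (N : ℝ≥0∞)⁻¹ * ENNReal.ofReal (1 - t) with hb
  have hNne : (N : ℝ≥0∞) ≠ 0 := by exact_mod_cast hN.ne'
  have hNRpos : (0 : ℝ) < N := by exact_mod_cast hN
  have hNinvtop : ((N : ℝ≥0∞))⁻¹ ≠ ⊤ := by simp [hNne]
  have hatop : a ≠ ⊤ := ENNReal.mul_ne_top hNinvtop ENNReal.ofReal_ne_top
  have hbtop : b ≠ ⊤ := ENNReal.mul_ne_top hNinvtop ENNReal.ofReal_ne_top
  have hab : a + b = (N : ℝ≥0∞)⁻¹ := by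
    rw [ha, hb, ← mul_add, ← ENNReal.ofReal_add ht0 (by linarith)]
    norm_num
  have hcard : ((Finset.univ.erase i₀).card : ℝ≥0∞) = ((N - 1 : ℕ) : ℝ≥0∞) := by
    rw [Finset.card_erase_of_mem (Finset.mem_univ _), Finset.card_univ, Fintype.card_fin]
  have harith : (N : ℝ≥0∞)⁻¹ + (N : ℝ≥0∞)⁻¹ * ((N - 1 : ℕ) : ℝ≥0∞) = 1 := by
    have h1 : (1 : ℝ≥0∞) + ((N - 1 : ℕ) : ℝ≥0∞) = (N : ℝ≥0∞) := by
      rw [← Nat.cast_one, ← Nat.cast_add]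
      congr 1
      omega
    calc (N : ℝ≥0∞)⁻¹ + (N : ℝ≥0∞)⁻¹ * ((N - 1 : ℕ) : ℝ≥0∞)
        = (N : ℝ≥0∞)⁻¹ * (1 + ((N - 1 : ℕ) : ℝ≥0∞)) := by rw [mul_add, mul_one]
    _ = (N : ℝ≥0∞)⁻¹ * (N : ℝ≥0∞) := by rw [h1]
    _ = 1 := ENNReal.inv_mul_cancel hNne (by simp)
  set Qm : Measure (Fin m → ℝ) :=
    a • Measure.dirac z + b • Measure.dirac x₀
      + (N : ℝ≥0∞)⁻¹ • ∑ i ∈ Finset.univ.erase i₀, Measure.dirac (xs i) with hQm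
  set π : Measure ((Fin m → ℝ) × (Fin m → ℝ)) :=
    a • Measure.dirac (z, x₀) + b • Measure.dirac (x₀, x₀)
      + (N : ℝ≥0∞)⁻¹ • ∑ i ∈ Finset.univ.erase i₀, Measure.dirac (xs i, xs i) with hπ
  have hQprob : IsProbabilityMeasure Qm := by
    constructor
    rw [hQm, triple_univ, hcard, hab, harith]
  have hπprob : IsProbabilityMeasure π := by
    constructor
    rw [hπ, triple_univ, hcard, hab, harith]
  have hfst : π.map Prod.fst = Qm := by
    rw [hπ, triple_map _ _ _ _ _ _ _ measurable_fst, hQm]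
  have hsnd : π.map Prod.snd = empirical N xs := by
    rw [hπ, triple_map _ _ _ _ _ _ _ measurable_snd]
    have h2 : a • Measure.dirac ((z, x₀).2) + b • Measure.dirac ((x₀, x₀).2)
        = (N : ℝ≥0∞)⁻¹ • Measure.dirac x₀ := by
      show a • Measure.dirac x₀ + b • Measure.dirac x₀ = _
      rw [← add_smul, hab]
    rw [h2]
    have h3 : (fun i => Measure.dirac ((xs i, xs i).2)) = fun i => Measure.dirac (xs i) :=
      rfl
    show (N : ℝ≥0∞)⁻¹ • Measure.dirac x₀
        + (N : ℝ≥0∞)⁻¹ • ∑ i ∈ Finset.univ.erase i₀, Measure.dirac (xs i) = _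
    rw [← smul_add, empirical, Finset.add_sum_erase _ (fun i => Measure.dirac (xs i))
      (Finset.mem_univ i₀)]
  have hcf : Measurable fun p : (Fin m → ℝ) × (Fin m → ℝ) =>
      ENNReal.ofReal (nrm (p.1 - p.2)) :=
    (hnrm.continuous.comp (continuous_fst.sub continuous_snd)).measurable.ennreal_ofReal
  have hcost' : ∫⁻ p, ENNReal.ofReal (nrm (p.1 - p.2)) ∂π ≤ ENNReal.ofReal ε := by
    rw [hπ, triple_lintegral _ _ _ _ _ _ _ _ hcf]
    simp only [sub_self, hnrm.zero, ENNReal.ofReal_zero, mul_zero, add_zero,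
      Finset.sum_const_zero]
    have hNcast : (N : ℝ≥0∞)⁻¹ = ENNReal.ofReal ((N : ℝ))⁻¹ := by
      rw [ENNReal.ofReal_inv_of_pos hNRpos, ENNReal.ofReal_natCast]
    rw [ha, hNcast, ← ENNReal.ofReal_mul (by positivity), ← ENNReal.ofReal_mul (by positivity)]
    refine ENNReal.ofReal_le_ofReal ?_
    calc (N : ℝ)⁻¹ * t * nrm (z - x₀) = t / N * nrm (z - x₀) := by ring
    _ ≤ ε := hcost
  have hQball : Qm ∈ WBall nrm 1 ε Set.univ (empirical N xs) := by
    refine ⟨hQprob, by simp, ?_⟩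
    rw [Wp_one_eq]
    refine le_trans ?_ hcost'
    exact iInf₂_le π ⟨hπprob, hfst, hsnd⟩
  have hℓint : Integrable ℓ Qm := by
    rw [hQm]
    exact triple_integrable hatop hbtop hNinvtop _ _ _ _ hℓc.stronglyMeasurable
  refine ⟨Qm, hQball, ?_⟩
  rw [eexp_coe_eq_integral _ _ hℓint]
  congr 1
  rw [hQm, triple_integral hatop hbtop hNinvtop _ _ _ _ hℓc.stronglyMeasurable]
  have hta : a.toReal = (N : ℝ)⁻¹ * t := by
    rw [ha, ENNReal.toReal_mul, ENNReal.toReal_inv, ENNReal.toReal_natCast,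
      ENNReal.toReal_ofReal ht0]
  have htb : b.toReal = (N : ℝ)⁻¹ * (1 - t) := by
    rw [hb, ENNReal.toReal_mul, ENNReal.toReal_inv, ENNReal.toReal_natCast,
      ENNReal.toReal_ofReal (by linarith)]
  have htc : ((N : ℝ≥0∞)⁻¹).toReal = (N : ℝ)⁻¹ := by
    rw [ENNReal.toReal_inv, ENNReal.toReal_natCast]
  rw [hta, htb, htc]
  have hsplit : ∑ i, ℓ (xs i)
      = ℓ (xs i₀) + ∑ i ∈ Finset.univ.erase i₀, ℓ (xs i) :=
    (Finset.add_sum_erase _ (fun i => ℓ (xs i)) (Finset.mem_univ i₀)).symm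
  rw [hsplit, ← hx₀]
  ring

end WpAux

section MainAux

variable {m : ℕ}

/-- Upper bound: any distribution in the ball has risk at most the regularized loss. -/
lemma upper_aux {N : ℕ} (hN : 0 < N) (nrm : (Fin m → ℝ) → ℝ) (hnrm : IsNorm nrm)
    {ε : ℝ} (hε : 0 ≤ ε) (xs : Fin N → (Fin m → ℝ)) {ℓ : (Fin m → ℝ) → ℝ}
    (hℓc : Continuous ℓ) {Lr : ℝ} (hLr : 0 ≤ Lr)
    (hlip : ∀ x y, |ℓ x - ℓ y| ≤ Lr * nrm (x - y))
    {Q : Measure (Fin m → ℝ)} (hQ : Q ∈ WBall nrm 1 ε Set.univ (empirical N xs)) :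
    eexp Q (fun x => ((ℓ x : ℝ) : EReal))
      ≤ (((N : ℝ)⁻¹ * ∑ i, ℓ (xs i) + ε * Lr : ℝ) : EReal) := by
  classical
  obtain ⟨hQp, -, hW⟩ := hQ
  rw [Wp_one_eq] at hW
  have hℓP : Integrable ℓ (empirical N xs) := integrable_empirical xs hℓc.stronglyMeasurable hN
  have hcfc : Continuous fun p : (Fin m → ℝ) × (Fin m → ℝ) => nrm (p.1 - p.2) :=
    hnrm.continuous.comp (continuous_fst.sub continuous_snd)
  have key : ∀ δ : ℝ, 0 < δ → Integrable ℓ Q ∧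
      ∫ x, ℓ x ∂Q ≤ (N : ℝ)⁻¹ * ∑ i, ℓ (xs i) + Lr * (ε + δ) := by
    intro δ hδ
    have hlt : (⨅ π ∈ Couplings Q (empirical N xs),
        ∫⁻ p, ENNReal.ofReal (nrm (p.1 - p.2)) ∂π) < ENNReal.ofReal (ε + δ) :=
      lt_of_le_of_lt hW (by
        rw [ENNReal.ofReal_lt_ofReal_iff (by linarith)]
        linarith)
    simp only [iInf_lt_iff] at hlt
    obtain ⟨π, hπmem, hπcost⟩ := hlt
    obtain ⟨hπp, hfst, hsnd⟩ := hπmem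
    -- integrability of the three relevant functions w.r.t. `π`
    have hg2 : Integrable (fun p : (Fin m → ℝ) × (Fin m → ℝ) => ℓ p.2) π := by
      have := (integrable_map_measure hℓc.stronglyMeasurable.aestronglyMeasurable
        measurable_snd.aemeasurable (μ := π)).1
      rw [hsnd] at this
      exact this hℓP
    have hcf : Integrable (fun p : (Fin m → ℝ) × (Fin m → ℝ) => nrm (p.1 - p.2)) π := by
      refine ⟨hcfc.aestronglyMeasurable, ?_⟩
      rw [HasFiniteIntegral]
      have heq : ∀ p : (Fin m → ℝ) × (Fin m → ℝ),
          (‖nrm (p.1 - p.2)‖₊ : ℝ≥0∞) = ENNReal.ofReal (nrm (p.1 - p.2)) := fun p =>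
        Real.enorm_eq_ofReal (hnrm.nonneg _)
      calc (∫⁻ p, (‖nrm (p.1 - p.2)‖₊ : ℝ≥0∞) ∂π)
          = ∫⁻ p, ENNReal.ofReal (nrm (p.1 - p.2)) ∂π := lintegral_congr heq
      _ < ENNReal.ofReal (ε + δ) := hπcost
      _ < ⊤ := ENNReal.ofReal_lt_top
    have hg1 : Integrable (fun p : (Fin m → ℝ) × (Fin m → ℝ) => ℓ p.1) π := by
      have hbound : Integrable
          (fun p : (Fin m → ℝ) × (Fin m → ℝ) => |ℓ p.2| + Lr * nrm (p.1 - p.2)) π :=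
        hg2.abs.add (hcf.const_mul Lr)
      refine hbound.mono
        (hℓc.comp continuous_fst).aestronglyMeasurable
        (Filter.Eventually.of_forall fun p => ?_)
      have h1 : |ℓ p.1 - ℓ p.2| ≤ Lr * nrm (p.1 - p.2) := hlip _ _
      have h2 : 0 ≤ Lr * nrm (p.1 - p.2) := mul_nonneg hLr (hnrm.nonneg _)
      rw [Real.norm_eq_abs, Real.norm_eq_abs]
      rw [abs_of_nonneg (by positivity : (0:ℝ) ≤ |ℓ p.2| + Lr * nrm (p.1 - p.2))]
      have h3 : |ℓ p.1| - |ℓ p.2| ≤ |ℓ p.1 - ℓ p.2| := abs_sub_abs_le_abs_sub _ _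
      linarith
    have hQint : Integrable ℓ Q := by
      rw [← hfst]
      exact (integrable_map_measure hℓc.stronglyMeasurable.aestronglyMeasurable
        measurable_fst.aemeasurable).2 hg1
    refine ⟨hQint, ?_⟩
    have hQeq : ∫ x, ℓ x ∂Q = ∫ p, ℓ p.1 ∂π := by
      rw [← hfst, integral_map measurable_fst.aemeasurable
        hℓc.stronglyMeasurable.aestronglyMeasurable]
    have hPeq : ∫ p, ℓ p.2 ∂π = (N : ℝ)⁻¹ * ∑ i, ℓ (xs i) := by
      rw [← integral_empirical xs hℓc.stronglyMeasurable, ← hsnd,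
        integral_map measurable_snd.aemeasurable
          hℓc.stronglyMeasurable.aestronglyMeasurable]
    have hcfval : ∫ p, nrm (p.1 - p.2) ∂π ≤ ε + δ := by
      rw [integral_eq_lintegral_of_nonneg_ae
        (Filter.Eventually.of_forall fun p => hnrm.nonneg _) hcfc.aestronglyMeasurable]
      calc (∫⁻ p, ENNReal.ofReal (nrm (p.1 - p.2)) ∂π).toReal
          ≤ (ENNReal.ofReal (ε + δ)).toReal :=
            ENNReal.toReal_mono ENNReal.ofReal_ne_top hπcost.le
      _ = ε + δ := ENNReal.toReal_ofReal (by linarith)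
    have hsub : ∫ p, (ℓ p.1 - ℓ p.2) ∂π ≤ ∫ p, Lr * nrm (p.1 - p.2) ∂π := by
      refine integral_mono (hg1.sub hg2) (hcf.const_mul Lr) fun p => ?_
      have := hlip p.1 p.2
      have := le_abs_self (ℓ p.1 - ℓ p.2)
      dsimp only
      linarith
    rw [integral_sub hg1 hg2] at hsub
    rw [integral_const_mul] at hsub
    have hLrcf : Lr * ∫ p, nrm (p.1 - p.2) ∂π ≤ Lr * (ε + δ) :=
      mul_le_mul_of_nonneg_left hcfval hLr
    rw [hQeq]
    rw [hPeq] at hsub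
    linarith
  have hQint : Integrable ℓ Q := (key 1 one_pos).1
  rw [eexp_coe_eq_integral _ _ hQint, EReal.coe_le_coe_iff]
  have hfinal : ∀ η : ℝ, 0 < η → ∫ x, ℓ x ∂Q ≤ ((N : ℝ)⁻¹ * ∑ i, ℓ (xs i) + ε * Lr) + η := by
    intro η hη
    have hδ : (0 : ℝ) < η / (Lr + 1) := by positivity
    have h2 := (key _ hδ).2
    have h3 : Lr * (η / (Lr + 1)) ≤ η := by
      rw [mul_div_assoc']
      rw [div_le_iff₀ (by linarith)]
      nlinarith
    nlinarith
  exact le_of_forall_pos_le_add hfinal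

/-- A probability measure at zero Wasserstein distance from the empirical distribution
equals it. -/
lemma ball_zero_aux {N : ℕ} (hN : 0 < N) (nrm : (Fin m → ℝ) → ℝ) (hnrm : IsNorm nrm)
    (xs : Fin N → (Fin m → ℝ)) {Q : Measure (Fin m → ℝ)}
    (hQ : Q ∈ WBall nrm 1 0 Set.univ (empirical N xs)) : Q = empirical N xs := by
  classical
  obtain ⟨hQp, -, hW⟩ := hQ
  rw [Wp_one_eq, ENNReal.ofReal_zero, le_zero_iff] at hW
  have hP : IsProbabilityMeasure (empirical N xs) := empirical_isProb hN xs
  have hkey : ∀ v : Fin m → ℝ, (empirical N xs) {v} ≤ Q {v} := by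
    intro v
    have hball : ∀ η : ℝ, 0 < η → (empirical N xs) {v} ≤ Q {u | nrm (u - v) ≤ η} := by
      intro η hη
      have hCm : MeasurableSet {u : Fin m → ℝ | nrm (u - v) ≤ η} :=
        (hnrm.measurable.comp (measurable_id.sub measurable_const)) measurableSet_Iic
      refine ENNReal.le_of_forall_pos_le_add fun δ hδ _ => ?_
      have hlt : (⨅ π ∈ Couplings Q (empirical N xs),
          ∫⁻ p, ENNReal.ofReal (nrm (p.1 - p.2)) ∂π) < ENNReal.ofReal (η * δ) := by
        rw [hW]
        exact ENNReal.ofReal_pos.2 (by positivity)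
      simp only [iInf_lt_iff] at hlt
      obtain ⟨π, hπmem, hπcost⟩ := hlt
      obtain ⟨hπp, hfst, hsnd⟩ := hπmem
      have hcfm : Measurable fun p : (Fin m → ℝ) × (Fin m → ℝ) =>
          ENNReal.ofReal (nrm (p.1 - p.2)) :=
        (hnrm.continuous.comp (continuous_fst.sub continuous_snd)).measurable.ennreal_ofReal
      -- Markov inequality
      have hmarkov : π {p : (Fin m → ℝ) × (Fin m → ℝ) | η < nrm (p.1 - p.2)}
          ≤ ENNReal.ofReal δ := by
        have hsub : {p : (Fin m → ℝ) × (Fin m → ℝ) | η < nrm (p.1 - p.2)}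
            ⊆ {p | ENNReal.ofReal η ≤ ENNReal.ofReal (nrm (p.1 - p.2))} := fun p hp =>
          ENNReal.ofReal_le_ofReal (le_of_lt hp)
        calc π {p : (Fin m → ℝ) × (Fin m → ℝ) | η < nrm (p.1 - p.2)}
            ≤ π {p | ENNReal.ofReal η ≤ ENNReal.ofReal (nrm (p.1 - p.2))} :=
              measure_mono hsub
        _ ≤ (∫⁻ p, ENNReal.ofReal (nrm (p.1 - p.2)) ∂π) / ENNReal.ofReal η :=
              meas_ge_le_lintegral_div hcfm.aemeasurable
                (ENNReal.ofReal_pos.2 hη).ne' ENNReal.ofReal_ne_top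
        _ ≤ ENNReal.ofReal (η * δ) / ENNReal.ofReal η :=
              ENNReal.div_le_div_right hπcost.le _
        _ = ENNReal.ofReal δ := by
              rw [← ENNReal.ofReal_div_of_pos hη]
              congr 1
              field_simp
      have hBval : π (Prod.snd ⁻¹' {v}) = (empirical N xs) {v} := by
        rw [← hsnd, Measure.map_apply measurable_snd (measurableSet_singleton v)]
      have hsplit : π (Prod.snd ⁻¹' {v})
          ≤ π (Prod.snd ⁻¹' {v} ∩ {p | nrm (p.1 - p.2) ≤ η})
            + π {p : (Fin m → ℝ) × (Fin m → ℝ) | η < nrm (p.1 - p.2)} := by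
        refine le_trans (measure_mono ?_) (measure_union_le _ _)
        intro p hp
        by_cases hc : nrm (p.1 - p.2) ≤ η
        · exact Or.inl ⟨hp, hc⟩
        · exact Or.inr (not_le.1 hc)
      have hinc : π (Prod.snd ⁻¹' {v} ∩ {p | nrm (p.1 - p.2) ≤ η})
          ≤ Q {u | nrm (u - v) ≤ η} := by
        rw [← hfst, Measure.map_apply measurable_fst hCm]
        refine measure_mono fun p hp => ?_
        have h1 : p.2 = v := hp.1
        have h2 : nrm (p.1 - p.2) ≤ η := hp.2
        show nrm (p.1 - v) ≤ η
        rwa [h1] at h2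
      calc (empirical N xs) {v} = π (Prod.snd ⁻¹' {v}) := hBval.symm
      _ ≤ π (Prod.snd ⁻¹' {v} ∩ {p | nrm (p.1 - p.2) ≤ η})
            + π {p : (Fin m → ℝ) × (Fin m → ℝ) | η < nrm (p.1 - p.2)} := hsplit
      _ ≤ Q {u | nrm (u - v) ≤ η} + ENNReal.ofReal δ := add_le_add hinc hmarkov
      _ = Q {u | nrm (u - v) ≤ η} + δ := by rw [ENNReal.ofReal_coe_nnreal]
    -- pass to the limit η → 0
    set S : ℕ → Set (Fin m → ℝ) := fun n => {u | nrm (u - v) ≤ 1 / (n + 1)} with hS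
    have hSm : ∀ n, MeasurableSet (S n) := fun n =>
      (hnrm.measurable.comp (measurable_id.sub measurable_const)) measurableSet_Iic
    have hSanti : Antitone S := by
      intro i j hij u hu
      have h1 : (1 : ℝ) / (j + 1) ≤ 1 / (i + 1) := by
        apply one_div_le_one_div_of_le
        · positivity
        · exact_mod_cast Nat.succ_le_succ hij
      exact le_trans hu h1
    have hSint : ⋂ n, S n = {v} := by
      ext u
      simp only [Set.mem_iInter, Set.mem_singleton_iff, hS, Set.mem_setOf_eq]
      constructor
      · intro h
        by_contra huv
        have hpos : 0 < nrm (u - v) := hnrm.pos (sub_ne_zero.2 huv)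
        obtain ⟨n, hn⟩ := exists_nat_one_div_lt hpos
        exact absurd (h n) (not_le.2 hn)
      · intro h n
        rw [h, sub_self, hnrm.zero]
        positivity
    have htend : Tendsto (fun n => Q (S n)) atTop (nhds (Q {v})) := by
      have := tendsto_measure_iInter_atTop (μ := Q)
        (fun n => (hSm n).nullMeasurableSet) hSanti ⟨0, measure_ne_top _ _⟩
      rwa [hSint] at this
    refine ge_of_tendsto htend (Filter.Eventually.of_forall fun n => ?_)
    exact hball (1 / (n + 1)) (by positivity)
  -- conclude via the point-mass lemma
  have hPT : (empirical N xs) (↑(Finset.image xs Finset.univ) : Set (Fin m → ℝ))ᶜ = 0 := by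
    have hTm : MeasurableSet (↑(Finset.image xs Finset.univ) : Set (Fin m → ℝ))ᶜ :=
      (Finset.image xs Finset.univ).finite_toSet.measurableSet.compl
    rw [empirical, Measure.smul_apply, Measure.finset_sum_apply]
    have hz : ∀ i : Fin N, Measure.dirac (xs i)
        (↑(Finset.image xs Finset.univ) : Set (Fin m → ℝ))ᶜ = 0 := by
      intro i
      rw [Measure.dirac_apply' _ hTm]
      have hmem : xs i ∈ (↑(Finset.image xs Finset.univ) : Set (Fin m → ℝ)) := by
        simp only [Finset.coe_image, Set.mem_image, Finset.mem_coe, Finset.mem_univ]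
        exact ⟨i, by simp⟩
      rw [Set.indicator_of_notMem (by simpa using hmem)]
    simp [hz]
  exact eq_of_point_masses Q (empirical N xs) hQp hP (Finset.image xs Finset.univ) hPT
    (fun v _ => hkey v)

end MainAux

end Aux

set_option maxHeartbeats 2000000 in
/-- **Convex loss and `p = 1`.** If `Ξ = ℝ^m`, the loss `ℓ` is convex and `P` is the
empirical distribution, then the worst-case risk over the type-1 Wasserstein ball equals
the Lipschitz-regularized empirical loss. -/
theorem convex_loss_p_one {m N : ℕ} (hN : 0 < N)
    (nrm : (Fin m → ℝ) → ℝ) (hnrm : IsNorm nrm) (ε : ℝ) (hε : 0 ≤ ε)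
    (xs : Fin N → (Fin m → ℝ)) (ℓ : (Fin m → ℝ) → ℝ)
    (hconv : ConvexOn ℝ Set.univ ℓ) :
    (⨆ Q : (WBall nrm 1 ε (Set.univ : Set (Fin m → ℝ)) (empirical N xs)),
        eexp Q.1 (fun x => ((ℓ x : ℝ) : EReal))) =
      (((1 / (N : ℝ)) * ∑ i, ℓ (xs i) : ℝ) : EReal)
        + ennToE (ENNReal.ofReal ε * lipMod nrm ℓ) := by
  classical
  have hℓc : Continuous ℓ := by
    have h := hconv.continuousOn isOpen_univ
    rwa [continuousOn_univ] at h
  have hNRpos : (0 : ℝ) < N := by exact_mod_cast hN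
  set L := lipMod nrm ℓ with hL
  set E0 : ℝ := (N : ℝ)⁻¹ * ∑ i, ℓ (xs i) with hE0
  have hE0eq : (1 / (N : ℝ)) * ∑ i, ℓ (xs i) = E0 := by rw [hE0, one_div]
  rw [hE0eq]
  -- the empirical distribution itself realizes the value `E0`
  have hbase : ∃ Q ∈ WBall nrm 1 ε Set.univ (empirical N xs),
      eexp Q (fun x => ((ℓ x : ℝ) : EReal)) = ((E0 : ℝ) : EReal) := by
    obtain ⟨Q, hQb, hQv⟩ := lower_aux hN nrm hnrm hε xs hℓc ⟨0, hN⟩ (xs ⟨0, hN⟩)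
      (le_refl (0:ℝ)) zero_le_one (by simpa using hε)
    refine ⟨Q, hQb, ?_⟩
    rw [hQv]
    norm_num [hE0]
  have hsupge : ((E0 : ℝ) : EReal) ≤ ⨆ Q : (WBall nrm 1 ε (Set.univ : Set (Fin m → ℝ))
      (empirical N xs)), eexp Q.1 (fun x => ((ℓ x : ℝ) : EReal)) := by
    obtain ⟨Q, hQb, hQv⟩ := hbase
    rw [← hQv]
    exact le_iSup (fun Q : (WBall nrm 1 ε (Set.univ : Set (Fin m → ℝ)) (empirical N xs)) =>
      eexp Q.1 (fun x => ((ℓ x : ℝ) : EReal))) ⟨Q, hQb⟩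
  rcases eq_or_lt_of_le hε with hε0 | hεpos
  · -- case `ε = 0`
    have hεz : ε = 0 := hε0.symm
    subst hεz
    have hRHS : ennToE (ENNReal.ofReal 0 * L) = (0 : EReal) := by
      simp [ennToE]
    rw [hRHS, add_zero]
    refine le_antisymm ?_ hsupge
    apply iSup_le
    rintro ⟨Q, hQb⟩
    have hQP : Q = empirical N xs := ball_zero_aux hN nrm hnrm xs hQb
    simp only [hQP]
    rw [eexp_coe_eq_integral _ _ (integrable_empirical xs hℓc.stronglyMeasurable hN),
      integral_empirical xs hℓc.stronglyMeasurable]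
  · -- case `ε > 0`
    refine le_antisymm ?_ ?_
    · -- upper bound
      by_cases hLtop : L = ⊤
      · rw [hLtop, ENNReal.mul_top (ENNReal.ofReal_pos.2 hεpos).ne']
        have h1 : ennToE ⊤ = ⊤ := by simp [ennToE]
        rw [h1, EReal.add_top_of_ne_bot (EReal.coe_ne_bot _)]
        exact le_top
      · set Lr := L.toReal with hLr
        have hLr0 : 0 ≤ Lr := ENNReal.toReal_nonneg
        have hlip : ∀ x y, |ℓ x - ℓ y| ≤ Lr * nrm (x - y) := by
          intro x y
          by_cases hxy : x = y
          · subst hxy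
            simp [sub_self, hnrm.zero]
          · have h1 : ENNReal.ofReal (|ℓ x - ℓ y| / nrm (x - y)) ≤ L := by
              rw [hL, lipMod]
              exact le_iSup_of_le x (le_iSup_of_le y (le_iSup_of_le hxy le_rfl))
            rw [ENNReal.ofReal_le_iff_le_toReal hLtop] at h1
            have hnd : 0 < nrm (x - y) := hnrm.pos (sub_ne_zero.2 hxy)
            rw [div_le_iff₀ hnd] at h1
            exact h1
        have hRHS : ennToE (ENNReal.ofReal ε * L) = ((ε * Lr : ℝ) : EReal) := by
          have hne : ENNReal.ofReal ε * L ≠ ⊤ :=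
            ENNReal.mul_ne_top ENNReal.ofReal_ne_top hLtop
          simp [ennToE, hne, ENNReal.toReal_mul, ENNReal.toReal_ofReal hε, hLr]
        rw [hRHS, ← EReal.coe_add]
        apply iSup_le
        rintro ⟨Q, hQb⟩
        exact upper_aux hN nrm hnrm hε xs hℓc hLr0 hlip hQb
    · -- lower bound
      apply le_of_forall_lt
      intro c hc
      by_cases hcE : c < ((E0 : ℝ) : EReal)
      · exact lt_of_lt_of_le hcE hsupge
      · push_neg at hcE
        have hcne_bot : c ≠ ⊥ := fun h => by
          rw [h, le_bot_iff] at hcE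
          exact EReal.coe_ne_bot E0 hcE
        have hcne_top : c ≠ ⊤ := (lt_of_lt_of_le hc le_top).ne
        set r : ℝ := c.toReal with hr
        have hceq : c = ((r : ℝ) : EReal) := (EReal.coe_toReal hcne_top hcne_bot).symm
        rw [hceq] at hc hcE ⊢
        have hrE0 : E0 ≤ r := by exact_mod_cast hcE
        set g : ℝ := (r - E0) / ε with hg
        have hg0 : 0 ≤ g := div_nonneg (by linarith) hε
        have hgL : ENNReal.ofReal g < L := by
          by_cases hLtop : L = ⊤
          · rw [hLtop]
            exact ENNReal.ofReal_lt_top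
          · have hne : ENNReal.ofReal ε * L ≠ ⊤ :=
              ENNReal.mul_ne_top ENNReal.ofReal_ne_top hLtop
            have hRHS : ennToE (ENNReal.ofReal ε * L) = ((ε * L.toReal : ℝ) : EReal) := by
              simp [ennToE, hne, ENNReal.toReal_mul, ENNReal.toReal_ofReal hε]
            rw [hRHS, ← EReal.coe_add] at hc
            have hrlt : r < E0 + ε * L.toReal := by exact_mod_cast hc
            have hglt : g < L.toReal := by
              rw [hg, div_lt_iff₀ hεpos]
              nlinarith
            calc ENNReal.ofReal g < ENNReal.ofReal L.toReal := by
                  rw [ENNReal.ofReal_lt_ofReal_iff_of_nonneg hg0]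
                  exact hglt
            _ = L := ENNReal.ofReal_toReal hLtop
        rw [hL, lipMod, lt_iSup_iff] at hgL
        obtain ⟨x, hx⟩ := hgL
        rw [lt_iSup_iff] at hx
        obtain ⟨y, hy⟩ := hx
        rw [lt_iSup_iff] at hy
        obtain ⟨hxy, hslope0⟩ := hy
        have hnd : 0 < nrm (x - y) := hnrm.pos (sub_ne_zero.2 hxy)
        have hslope : g < |ℓ x - ℓ y| / nrm (x - y) := by
          rwa [ENNReal.ofReal_lt_ofReal_iff_of_nonneg hg0] at hslope0
        -- main construction, for an ordered pair (u, w) with positive slope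
        have main : ∀ u w : Fin m → ℝ, u ≠ w → g < (ℓ u - ℓ w) / nrm (u - w) →
            ((r : ℝ) : EReal) < ⨆ Q : (WBall nrm 1 ε (Set.univ : Set (Fin m → ℝ))
              (empirical N xs)), eexp Q.1 (fun x => ((ℓ x : ℝ) : EReal)) := by
          intro u w hne hsl
          set d : Fin m → ℝ := u - w with hd
          have hd0 : d ≠ 0 := sub_ne_zero.2 hne
          set nd : ℝ := nrm d with hnd'
          have hndpos : 0 < nd := hnrm.pos hd0
          set aℓ : ℝ := ℓ u - ℓ w with haℓ
          set i₀ : Fin N := ⟨0, hN⟩ with hi₀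
          set x₀ : Fin m → ℝ := xs i₀ with hx₀
          set K : ℝ := nrm (w - x₀) with hK
          have hK0 : 0 ≤ K := hnrm.nonneg _
          set B : ℝ := ℓ w - ℓ x₀ with hB
          -- convexity: linear growth along the ray
          have hconvK : ∀ c' : ℝ, 1 ≤ c' → ℓ w + c' * aℓ ≤ ℓ (w + c' • d) := by
            intro c' hc1
            have hc0 : (0:ℝ) < c' := lt_of_lt_of_le one_pos hc1
            have hcoef : 1 / c' + (1 - 1 / c') = 1 := by ring
            have hb0 : (0:ℝ) ≤ 1 - 1 / c' := by
              have : 1 / c' ≤ 1 := by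
                rw [div_le_one hc0]
                exact hc1
              linarith
            have hmem := hconv.2 (Set.mem_univ (w + c' • d)) (Set.mem_univ w)
              (by positivity : (0:ℝ) ≤ 1 / c') hb0 hcoef
            have hpt : (1 / c') • (w + c' • d) + (1 - 1 / c') • w = u := by
              rw [smul_add, smul_smul, one_div_mul_cancel hc0.ne', one_smul]
              have hw : (1 / c') • w + (1 - 1 / c') • w = w := by
                rw [← add_smul, hcoef, one_smul]
              calc (1 / c') • w + d + (1 - 1 / c') • w
                  = ((1 / c') • w + (1 - 1 / c') • w) + d := by abel
              _ = w + d := by rw [hw]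
              _ = u := by rw [hd]; abel
            rw [hpt] at hmem
            simp only [smul_eq_mul] at hmem
            have hmul := mul_le_mul_of_nonneg_left hmem hc0.le
            have he1 : c' * (1 / c' * ℓ (w + c' • d) + (1 - 1 / c') * ℓ w)
                = ℓ (w + c' • d) + (c' - 1) * ℓ w := by
              field_simp
              try ring
            rw [he1] at hmul
            rw [haℓ]
            nlinarith
          -- choose a large dilation parameter `c'`
          set φ : ℝ → ℝ := fun c' => ε * (B + c' * aℓ) / (c' * nd + K) with hφ
          have htend : Tendsto φ atTop (nhds (ε * aℓ / nd)) := by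
            have hψ : Tendsto (fun c' : ℝ => (ε * B / c' + ε * aℓ) / (nd + K / c'))
                atTop (nhds ((0 + ε * aℓ) / (nd + 0))) := by
              refine Tendsto.div ?_ ?_ (by simpa using hndpos.ne')
              · exact (Tendsto.div_atTop tendsto_const_nhds tendsto_id).add
                  tendsto_const_nhds
              · exact tendsto_const_nhds.add
                  (Tendsto.div_atTop tendsto_const_nhds tendsto_id)
            have heq : ∀ᶠ c' in (atTop : Filter ℝ),
                (ε * B / c' + ε * aℓ) / (nd + K / c') = φ c' := by
              filter_upwards [eventually_gt_atTop (0:ℝ)] with c' hc'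
              have hden1 : c' * nd + K > 0 := by positivity
              rw [hφ]
              field_simp
            have := hψ.congr' heq
            simpa using this
          have hgap : ε * g < ε * aℓ / nd := by
            rw [mul_div_assoc]
            exact (mul_lt_mul_iff_right₀ hεpos).2 hsl
          have hev1 : ∀ᶠ c' in (atTop : Filter ℝ), ε * g < φ c' :=
            htend.eventually_const_lt hgap
          have hev2 : ∀ᶠ c' in (atTop : Filter ℝ), (1:ℝ) ≤ c' := eventually_ge_atTop 1
          have hev3 : ∀ᶠ c' in (atTop : Filter ℝ), (N:ℝ) * ε ≤ c' * nd + K := by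
            filter_upwards [eventually_ge_atTop ((N * ε)/nd)] with c' hc'
            rw [div_le_iff₀ hndpos] at hc'
            nlinarith
          obtain ⟨c', h1, h2, h3⟩ := (hev1.and (hev2.and hev3)).exists
          have hc'0 : (0:ℝ) < c' := lt_of_lt_of_le one_pos h2
          have hden : (0:ℝ) < c' * nd + K := by positivity
          set t : ℝ := (N:ℝ) * ε / (c' * nd + K) with ht
          have ht0 : 0 ≤ t := by positivity
          have ht1 : t ≤ 1 := by
            rw [ht, div_le_one hden]
            exact h3
          set z : Fin m → ℝ := w + c' • d with hz
          have htN : t / N = ε / (c' * nd + K) := by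
            rw [ht]
            field_simp
            all_goals ring
          have hcost : t / N * nrm (z - x₀) ≤ ε := by
            have hnz : nrm (z - x₀) ≤ c' * nd + K := by
              have hzx : z - x₀ = (c' • d) + (w - x₀) := by
                rw [hz]
                all_goals abel
              rw [hzx]
              refine le_trans (hnrm.triangle _ _) ?_
              rw [hnrm.homog, abs_of_pos hc'0]
              all_goals rw [hnd', hK]
            rw [htN]
            calc ε / (c' * nd + K) * nrm (z - x₀) ≤ ε / (c' * nd + K) * (c' * nd + K) :=
                  mul_le_mul_of_nonneg_left hnz (by positivity)
            _ = ε := div_mul_cancel₀ ε hden.ne'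
          obtain ⟨Qc, hQcb, hQcv⟩ := lower_aux hN nrm hnrm hε xs hℓc i₀ z ht0 ht1 hcost
          have hgain : r < (N:ℝ)⁻¹ * ∑ i, ℓ (xs i) + t / N * (ℓ z - ℓ (xs i₀)) := by
            have hεg : ε * g = r - E0 := by
              rw [hg]
              field_simp
            have hℓz : ℓ w + c' * aℓ ≤ ℓ z := hconvK c' h2
            have hφval : t / N * (B + c' * aℓ) = φ c' := by
              rw [htN, hφ]
              field_simp
            have hmono : t / N * (B + c' * aℓ) ≤ t / N * (ℓ z - ℓ x₀) := by
              have hbd : B + c' * aℓ ≤ ℓ z - ℓ x₀ := by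
                rw [hB]
                linarith
              have htN0 : 0 ≤ t / N := by positivity
              exact mul_le_mul_of_nonneg_left hbd htN0
            rw [hφval] at hmono
            rw [hE0] at hεg
            rw [← hx₀]
            nlinarith
          calc ((r : ℝ) : EReal)
              < (((N:ℝ)⁻¹ * ∑ i, ℓ (xs i) + t / N * (ℓ z - ℓ (xs i₀)) : ℝ) : EReal) := by
                exact_mod_cast hgain
          _ = eexp Qc (fun x => ((ℓ x : ℝ) : EReal)) := hQcv.symm
          _ ≤ ⨆ Q : (WBall nrm 1 ε (Set.univ : Set (Fin m → ℝ)) (empirical N xs)),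
                eexp Q.1 (fun x => ((ℓ x : ℝ) : EReal)) :=
            le_iSup (fun Q : (WBall nrm 1 ε (Set.univ : Set (Fin m → ℝ))
              (empirical N xs)) => eexp Q.1 (fun x => ((ℓ x : ℝ) : EReal))) ⟨Qc, hQcb⟩
        rcases le_or_gt (ℓ x) (ℓ y) with hcase | hcase
        · refine main y x (Ne.symm hxy) ?_
          have habs : |ℓ x - ℓ y| = ℓ y - ℓ x := by
            rw [abs_of_nonpos (by linarith)]
            ring
          have hsym : nrm (y - x) = nrm (x - y) := by
            rw [show y - x = -(x - y) from by abel, hnrm.neg']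
          rw [hsym, ← habs]
          exact hslope
        · refine main x y hxy ?_
          have habs : |ℓ x - ℓ y| = ℓ x - ℓ y := abs_of_pos (by linarith)
          rw [← habs]
          exact hslope

end WDro
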